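/- Let 1 ≤ p < ∞ and 0 < η < 1. Let f : [η,1] → [0,∞) be continuous, nonincreasing and convex with f(η) ≤ 1, f(1) = 0 and f(x) > 0 for x ∈ [η,1), and assume there is r ≥ 1 such that x ↦ f(x)^{1/r} is concave on [η,1]. Let K ⊆ ℝ² be a compact set containing {(x,y) : η ≤ x ≤ 1, 0 ≤ y ≤ f(x)}. Assume that for every sufficiently large n there exist ε_n > 0 and x_n ∈ (η,1) with x_n = 1 − √(1/(4n⁴) − ε_n²/n⁴) and f(x_n) = ε_n/n², and that ε_n → 0. Let α ≥ 0 and β > −1. Then there exist Υ > 0 and n₀ such that for all n ≥ n₀, ∬_K |P_n^{(α,β)}(x)|^p dx dy ≥ Υ ε_n n^{αp − 4}. -/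

import Mathlib

set_option maxHeartbeats 1000000


open MeasureTheory

/-- The Jacobi polynomial `P_n^{(α,β)}` as a real function. -/
noncomputable def jacobiP (n : ℕ) (α β : ℝ) (x : ℝ) : ℝ :=
  ∑ s ∈ Finset.range (n + 1),
    (Real.Gamma (n + α + 1) / (Real.Gamma (s + α + 1) * Real.Gamma ((n : ℝ) - s + 1))) *
    (Real.Gamma (n + β + 1) / (Real.Gamma ((n : ℝ) - s + β + 1) * Real.Gamma (s + 1))) *
    ((x - 1) / 2) ^ s * ((x + 1) / 2) ^ (n - s)



lemma Gamma_add_nat_eq (t : ℝ) (ht : 0 < t) (k : ℕ) :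
    Real.Gamma (t + k) = Real.Gamma t * ∏ j ∈ Finset.range k, (t + j) := by
  induction k with
  | zero => simp
  | succ k ih =>
    have h1 : (0:ℝ) < t + k := by positivity
    have h2 : (t + ((k:ℕ)+1 : ℕ) : ℝ) = (t + k) + 1 := by push_cast; ring
    rw [h2, Real.Gamma_add_one h1.ne', ih, Finset.prod_range_succ]
    ring

lemma Gamma_add_nat_le (t M : ℝ) (ht : 0 < t) (k : ℕ)
    (hM : ∀ j : ℕ, j < k → t + j ≤ M) :
    Real.Gamma (t + k) ≤ Real.Gamma t * M ^ k := by
  rw [Gamma_add_nat_eq t ht k]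
  have hΓ : 0 < Real.Gamma t := Real.Gamma_pos_of_pos ht
  have hprod : ∏ j ∈ Finset.range k, (t + (j:ℝ)) ≤ M ^ k := by
    calc ∏ j ∈ Finset.range k, (t + (j:ℝ)) ≤ ∏ _j ∈ Finset.range k, M := by
          apply Finset.prod_le_prod
          · intro j _; positivity
          · intro j hj; exact hM j (Finset.mem_range.mp hj)
      _ = M ^ k := by rw [Finset.prod_const, Finset.card_range]
  exact mul_le_mul_of_nonneg_left hprod hΓ.le

lemma Gamma_le_Gamma_add_nat (t : ℝ) (ht : 1 ≤ t) (k : ℕ) :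
    Real.Gamma t ≤ Real.Gamma (t + k) := by
  rw [Gamma_add_nat_eq t (by linarith) k]
  have hΓ : 0 < Real.Gamma t := Real.Gamma_pos_of_pos (by linarith)
  have : (1:ℝ) ≤ ∏ j ∈ Finset.range k, (t + (j:ℝ)) := by
    calc (1:ℝ) = ∏ _j ∈ Finset.range k, (1:ℝ) := by simp
      _ ≤ ∏ j ∈ Finset.range k, (t + (j:ℝ)) := by
          apply Finset.prod_le_prod
          · intro j _; norm_num
          · intro j _
            have : (0:ℝ) ≤ j := Nat.cast_nonneg j
            linarith
  nlinarith

lemma npow_mul_Gamma_le (n : ℕ) (hn : 1 ≤ n) (α : ℝ) (hα : 0 ≤ α) :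
    (n:ℝ) ^ α * Real.Gamma (n + 1) ≤ Real.Gamma ((n:ℝ) + α + 1) := by
  rcases eq_or_lt_of_le hα with h | h
  · rw [← h]; simp
  · have hn1 : (1:ℝ) ≤ (n:ℝ) := by exact_mod_cast hn
    have hnpos : (0:ℝ) < n := by linarith
    have hmem1 : (n:ℝ) ∈ Set.Ioi (0:ℝ) := hnpos
    have hmem2 : (n:ℝ) + 1 + α ∈ Set.Ioi (0:ℝ) := by simp only [Set.mem_Ioi]; linarith
    have hslope := Real.convexOn_log_Gamma.slope_mono_adjacent hmem1 hmem2
      (show (n:ℝ) < n + 1 by linarith) (show (n:ℝ)+1 < n + 1 + α by linarith)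
    simp only [Function.comp_apply] at hslope
    have hΓn : 0 < Real.Gamma (n:ℝ) := Real.Gamma_pos_of_pos hnpos
    have hΓn1 : 0 < Real.Gamma ((n:ℝ)+1) := Real.Gamma_pos_of_pos (by linarith)
    have hΓ2 : 0 < Real.Gamma ((n:ℝ)+1+α) := Real.Gamma_pos_of_pos (by linarith)
    have hrec : Real.Gamma ((n:ℝ)+1) = (n:ℝ) * Real.Gamma (n:ℝ) :=
      Real.Gamma_add_one hnpos.ne'
    have h1 : (Real.log (Real.Gamma ((n:ℝ)+1)) - Real.log (Real.Gamma (n:ℝ))) / ((n:ℝ)+1 - n)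
        = Real.log (n:ℝ) := by
      rw [hrec, Real.log_mul hnpos.ne' hΓn.ne']
      field_simp
      ring
    rw [h1] at hslope
    have hαeq : (n:ℝ)+1+α - ((n:ℝ)+1) = α := by ring
    rw [hαeq] at hslope
    have h2 : Real.log (n:ℝ) * α ≤
        Real.log (Real.Gamma ((n:ℝ)+1+α)) - Real.log (Real.Gamma ((n:ℝ)+1)) :=
      (le_div_iff₀ h).mp hslope
    have h3 : Real.Gamma ((n:ℝ)+1) * (n:ℝ) ^ α ≤ Real.Gamma ((n:ℝ)+1+α) := by
      have := Real.exp_le_exp.mpr (show Real.log (Real.Gamma ((n:ℝ)+1)) + Real.log (n:ℝ) * α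
          ≤ Real.log (Real.Gamma ((n:ℝ)+1+α)) by linarith)
      rwa [Real.exp_add, Real.exp_log hΓn1, Real.exp_log hΓ2,
        ← Real.rpow_def_of_pos hnpos] at this
    have heq : (n:ℝ) + α + 1 = (n:ℝ) + 1 + α := by ring
    rw [heq]
    linarith


lemma two_pow_le_two_mul_factorial : ∀ k : ℕ, 2 ^ k ≤ 2 * k.factorial := by
  intro k
  induction k with
  | zero => norm_num
  | succ k ih =>
    rcases Nat.eq_zero_or_pos k with h | h
    · subst h; norm_num
    · calc 2 ^ (k+1) = 2 * 2 ^ k := by ring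
        _ ≤ 2 * (2 * k.factorial) := by omega
        _ ≤ 2 * ((k+1) * k.factorial) := by
            have : 2 ≤ k + 1 := by omega
            have := Nat.factorial_pos k
            nlinarith
        _ = 2 * (k+1).factorial := by rw [Nat.factorial_succ]

lemma jacobi_term_bound (n k : ℕ) (hk1 : 1 ≤ k) (hkn : k ≤ n) (α β : ℝ)
    (hα : 0 ≤ α) (hβ : -1 < β) (hβn : β ≤ n) (δ : ℝ) (hδ0 : 0 ≤ δ)
    (hδ : 4 * (n:ℝ)^2 * δ ≤ 1) :
    (Real.Gamma (n + α + 1) / (Real.Gamma (k + α + 1) * Real.Gamma ((n:ℝ) - k + 1))) *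
    (Real.Gamma (n + β + 1) / (Real.Gamma ((n:ℝ) - k + β + 1) * Real.Gamma (k + 1))) * δ ^ k
      ≤ Real.Gamma (n + α + 1) / (Real.Gamma (α+1) * Real.Gamma ((n:ℝ)+1)) * (2 * (1/4:ℝ)^k) := by
  have hn1 : 1 ≤ n := le_trans hk1 hkn
  have hnR : (1:ℝ) ≤ (n:ℝ) := by exact_mod_cast hn1
  have hkR : (k:ℝ) ≤ (n:ℝ) := by exact_mod_cast hkn
  have hnk0 : (0:ℝ) < (n:ℝ) - k + 1 := by linarith
  have hnkβ0 : (0:ℝ) < (n:ℝ) - k + β + 1 := by linarith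
  have hΓnα : 0 < Real.Gamma ((n:ℝ) + α + 1) := Real.Gamma_pos_of_pos (by linarith)
  have hΓnβ : 0 < Real.Gamma ((n:ℝ) + β + 1) := Real.Gamma_pos_of_pos (by linarith)
  have hΓkα : 0 < Real.Gamma ((k:ℝ) + α + 1) := Real.Gamma_pos_of_pos (by positivity)
  have hΓnk : 0 < Real.Gamma ((n:ℝ) - k + 1) := Real.Gamma_pos_of_pos hnk0
  have hΓnkβ : 0 < Real.Gamma ((n:ℝ) - k + β + 1) := Real.Gamma_pos_of_pos hnkβ0
  have hΓk : 0 < Real.Gamma ((k:ℝ) + 1) := Real.Gamma_pos_of_pos (by positivity)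
  have hΓα : 0 < Real.Gamma (α + 1) := Real.Gamma_pos_of_pos (by linarith)
  have hΓn : 0 < Real.Gamma ((n:ℝ) + 1) := Real.Gamma_pos_of_pos (by linarith)
  -- (i) Γ(α+1) ≤ Γ(k+α+1)
  have hi : Real.Gamma (α+1) ≤ Real.Gamma ((k:ℝ) + α + 1) := by
    have := Gamma_le_Gamma_add_nat (α+1) (by linarith) k
    have heq : α + 1 + (k:ℝ) = (k:ℝ) + α + 1 := by ring
    rwa [heq] at this
  -- (ii) Γ(n+1) ≤ Γ(n-k+1) * n^k
  have hii : Real.Gamma ((n:ℝ)+1) ≤ Real.Gamma ((n:ℝ) - k + 1) * (n:ℝ) ^ k := by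
    have := Gamma_add_nat_le ((n:ℝ) - k + 1) (n:ℝ) hnk0 k (by
      intro j hj
      have : (j:ℝ) ≤ (k:ℝ) - 1 := by
        have : (j:ℝ) + 1 ≤ (k:ℝ) := by exact_mod_cast hj
        linarith
      linarith)
    have heq : (n:ℝ) - k + 1 + (k:ℝ) = (n:ℝ) + 1 := by ring
    rwa [heq] at this
  -- (iii) Γ(n+β+1) ≤ Γ(n-k+β+1) * (2n)^k
  have hiii : Real.Gamma ((n:ℝ)+β+1) ≤ Real.Gamma ((n:ℝ) - k + β + 1) * (2*(n:ℝ)) ^ k := by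
    have := Gamma_add_nat_le ((n:ℝ) - k + β + 1) (2*(n:ℝ)) hnkβ0 k (by
      intro j hj
      have hj' : (j:ℝ) ≤ (k:ℝ) - 1 := by
        have : (j:ℝ) + 1 ≤ (k:ℝ) := by exact_mod_cast hj
        linarith
      linarith)
    have heq : (n:ℝ) - k + β + 1 + (k:ℝ) = (n:ℝ) + β + 1 := by ring
    rwa [heq] at this
  -- (iv) k! = Γ(k+1)
  have hfact : Real.Gamma ((k:ℝ) + 1) = (k.factorial : ℝ) := by
    rw [← Real.Gamma_nat_eq_factorial]
  -- combine
  have key : (n:ℝ)^k * (2*(n:ℝ))^k * δ^k / Real.Gamma ((k:ℝ)+1) ≤ 2 * (1/4:ℝ)^k := by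
    have h1 : (n:ℝ)^k * (2*(n:ℝ))^k * δ^k = (2*(n:ℝ)^2*δ)^k := by
      rw [mul_pow, mul_pow, mul_pow]; ring
    have h2 : (2*(n:ℝ)^2*δ) ≤ 1/2 := by linarith
    have h2' : (0:ℝ) ≤ 2*(n:ℝ)^2*δ := by positivity
    have h3 : (2*(n:ℝ)^2*δ)^k ≤ (1/2:ℝ)^k := pow_le_pow_left₀ h2' h2 k
    have h4 : ((2:ℝ)^k : ℝ) ≤ 2 * (k.factorial : ℝ) := by
      exact_mod_cast two_pow_le_two_mul_factorial k
    have hfk : (0:ℝ) < (k.factorial : ℝ) := by exact_mod_cast k.factorial_pos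
    rw [h1, hfact, div_le_iff₀ hfk]
    calc (2*(n:ℝ)^2*δ)^k ≤ (1/2:ℝ)^k := h3
      _ = (1/4:ℝ)^k * (2:ℝ)^k := by rw [← mul_pow]; norm_num
      _ ≤ (1/4:ℝ)^k * (2 * (k.factorial:ℝ)) :=
          mul_le_mul_of_nonneg_left h4 (by positivity)
      _ = 2 * (1/4:ℝ)^k * (k.factorial:ℝ) := by ring
  have hA : Real.Gamma ((n:ℝ) + α + 1) / (Real.Gamma ((k:ℝ) + α + 1) * Real.Gamma ((n:ℝ) - k + 1))
      ≤ Real.Gamma ((n:ℝ) + α + 1) * (n:ℝ)^k / (Real.Gamma (α+1) * Real.Gamma ((n:ℝ)+1)) := by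
    rw [div_le_div_iff₀ (by positivity) (by positivity)]
    have hprod : Real.Gamma (α+1) * Real.Gamma ((n:ℝ)+1)
        ≤ Real.Gamma ((k:ℝ) + α + 1) * (Real.Gamma ((n:ℝ) - k + 1) * (n:ℝ)^k) :=
      mul_le_mul hi hii hΓn.le hΓkα.le
    have := mul_le_mul_of_nonneg_left hprod hΓnα.le
    nlinarith [this]
  have hB : Real.Gamma ((n:ℝ) + β + 1) / (Real.Gamma ((n:ℝ) - k + β + 1) * Real.Gamma ((k:ℝ) + 1))
      ≤ (2*(n:ℝ))^k / Real.Gamma ((k:ℝ) + 1) := by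
    rw [div_le_div_iff₀ (by positivity) hΓk]
    have := mul_le_mul_of_nonneg_right hiii hΓk.le
    nlinarith [this]
  have hLHS_nonneg : (0:ℝ) ≤ Real.Gamma ((n:ℝ) + α + 1) / (Real.Gamma ((k:ℝ) + α + 1) * Real.Gamma ((n:ℝ) - k + 1)) := by positivity
  calc (Real.Gamma (n + α + 1) / (Real.Gamma (k + α + 1) * Real.Gamma ((n:ℝ) - k + 1))) *
      (Real.Gamma (n + β + 1) / (Real.Gamma ((n:ℝ) - k + β + 1) * Real.Gamma (k + 1))) * δ ^ k
      ≤ (Real.Gamma ((n:ℝ) + α + 1) * (n:ℝ)^k / (Real.Gamma (α+1) * Real.Gamma ((n:ℝ)+1))) *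
        ((2*(n:ℝ))^k / Real.Gamma ((k:ℝ) + 1)) * δ ^ k := by
        apply mul_le_mul_of_nonneg_right _ (by positivity)
        exact mul_le_mul hA hB (by positivity) (by positivity)
    _ = Real.Gamma ((n:ℝ) + α + 1) / (Real.Gamma (α+1) * Real.Gamma ((n:ℝ)+1)) *
        ((n:ℝ)^k * (2*(n:ℝ))^k * δ^k / Real.Gamma ((k:ℝ)+1)) := by
      field_simp
    _ ≤ Real.Gamma ((n:ℝ) + α + 1) / (Real.Gamma (α+1) * Real.Gamma ((n:ℝ)+1)) * (2 * (1/4:ℝ)^k) :=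
      mul_le_mul_of_nonneg_left key (by positivity)

lemma jacobi_lower (n : ℕ) (hn : 1 ≤ n) (α β : ℝ) (hα : 0 ≤ α) (hβ : -1 < β)
    (hβn : β ≤ (n:ℝ)) (x : ℝ) (hx0 : 0 ≤ x) (hx1 : x ≤ 1)
    (hxn : 1 - x ≤ 1 / (2 * (n:ℝ)^2)) :
    Real.Gamma ((n:ℝ) + α + 1) / (Real.Gamma (α+1) * Real.Gamma ((n:ℝ)+1)) / 12
      ≤ jacobiP n α β x := by
  have hnR : (1:ℝ) ≤ (n:ℝ) := by exact_mod_cast hn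
  have hn2 : (0:ℝ) < (n:ℝ)^2 := by positivity
  have hΓnα : 0 < Real.Gamma ((n:ℝ) + α + 1) := Real.Gamma_pos_of_pos (by linarith)
  have hΓnβ : 0 < Real.Gamma ((n:ℝ) + β + 1) := Real.Gamma_pos_of_pos (by linarith)
  have hΓα : 0 < Real.Gamma (α + 1) := Real.Gamma_pos_of_pos (by linarith)
  have hΓn : 0 < Real.Gamma ((n:ℝ) + 1) := Real.Gamma_pos_of_pos (by linarith)
  set C : ℝ := Real.Gamma ((n:ℝ) + α + 1) / (Real.Gamma (α+1) * Real.Gamma ((n:ℝ)+1)) with hCdef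
  have hC : 0 < C := by positivity
  have hδ0 : (0:ℝ) ≤ (1 - x)/2 := by linarith
  have hδ : 4 * (n:ℝ)^2 * ((1 - x)/2) ≤ 1 := by
    have h1 : (1 - x) * (2 * (n:ℝ)^2) ≤ (1 / (2 * (n:ℝ)^2)) * (2 * (n:ℝ)^2) :=
      mul_le_mul_of_nonneg_right hxn (by positivity)
    have h2 : (1 / (2 * (n:ℝ)^2)) * (2 * (n:ℝ)^2) = 1 := by field_simp
    nlinarith
  rw [jacobiP, Finset.sum_range_succ']
  -- the s = 0 term
  have hT0 : (Real.Gamma (n + α + 1) / (Real.Gamma ((0:ℕ) + α + 1) * Real.Gamma ((n : ℝ) - (0:ℕ) + 1))) *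
      (Real.Gamma (n + β + 1) / (Real.Gamma ((n : ℝ) - (0:ℕ) + β + 1) * Real.Gamma ((0:ℕ) + 1))) *
      ((x - 1) / 2) ^ (0:ℕ) * ((x + 1) / 2) ^ (n - 0) = C * ((x+1)/2)^n := by
    simp only [Nat.cast_zero, zero_add, sub_zero, pow_zero, mul_one, Nat.sub_zero]
    rw [Real.Gamma_one, mul_one, div_self hΓnβ.ne', mul_one]
  rw [hT0]
  -- lower bound for the s = 0 term
  have hbase : (x+1)/2 = 1 - (1-x)/2 := by ring
  have hT0low : C * (3/4 : ℝ) ≤ C * ((x+1)/2)^n := by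
    apply mul_le_mul_of_nonneg_left _ hC.le
    rw [hbase]
    have hber : 1 + (n:ℝ) * (-( (1-x)/2 )) ≤ (1 + (-( (1-x)/2 )))^n :=
      one_add_mul_le_pow (by linarith) n
    have hnd : (n:ℝ) * ((1-x)/2) ≤ 1/4 := by
      have h1 : (n:ℝ) * ((1-x)/2) = (4 * (n:ℝ)^2 * ((1 - x)/2)) / (4*(n:ℝ)) := by
        field_simp
      rw [h1]
      have h2 : (4 * (n:ℝ)^2 * ((1 - x)/2)) / (4*(n:ℝ)) ≤ 1 / (4*(n:ℝ)) := by
        gcongr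
      have h3 : 1 / (4*(n:ℝ)) ≤ 1/4 := by
        rw [div_le_div_iff₀ (by positivity) (by norm_num)]
        linarith
      linarith
    have he : (1:ℝ) + -((1-x)/2) = 1 - (1-x)/2 := by ring
    rw [he] at hber
    linarith
  -- tail bound
  have htail : ∀ s ∈ Finset.range n,
      |(Real.Gamma (n + α + 1) / (Real.Gamma ((s+1 : ℕ) + α + 1) * Real.Gamma ((n : ℝ) - (s+1 : ℕ) + 1))) *
      (Real.Gamma (n + β + 1) / (Real.Gamma ((n : ℝ) - (s+1 : ℕ) + β + 1) * Real.Gamma ((s+1 : ℕ) + 1))) *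
      ((x - 1) / 2) ^ (s+1) * ((x + 1) / 2) ^ (n - (s+1))|
        ≤ C * (2 * (1/4:ℝ)^(s+1)) := by
    intro s hs
    have hs' : s + 1 ≤ n := Finset.mem_range.mp hs
    set A := Real.Gamma (n + α + 1) / (Real.Gamma ((s+1 : ℕ) + α + 1) * Real.Gamma ((n : ℝ) - (s+1 : ℕ) + 1)) with hAdef
    set B := Real.Gamma (n + β + 1) / (Real.Gamma ((n : ℝ) - (s+1 : ℕ) + β + 1) * Real.Gamma ((s+1 : ℕ) + 1)) with hBdef
    have hsR : ((s:ℝ) + 1) ≤ (n:ℝ) := by exact_mod_cast hs'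
    have hA0 : 0 ≤ A := by
      apply div_nonneg hΓnα.le
      apply mul_nonneg
      · exact (Real.Gamma_pos_of_pos (by push_cast; positivity)).le
      · exact (Real.Gamma_pos_of_pos (by push_cast; linarith)).le
    have hB0 : 0 ≤ B := by
      apply div_nonneg hΓnβ.le
      apply mul_nonneg
      · exact (Real.Gamma_pos_of_pos (by push_cast; linarith)).le
      · exact (Real.Gamma_pos_of_pos (by push_cast; positivity)).le
    have habs : |A * B * ((x - 1) / 2) ^ (s+1) * ((x + 1) / 2) ^ (n - (s+1))|
        ≤ A * B * ((1-x)/2) ^ (s+1) := by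
      rw [abs_mul, abs_mul, abs_mul, abs_of_nonneg hA0, abs_of_nonneg hB0, abs_pow, abs_pow]
      have e1 : |(x - 1) / 2| = (1-x)/2 := by
        rw [abs_of_nonpos (by linarith)]; ring
      have e2 : |(x + 1) / 2| ^ (n - (s+1)) ≤ 1 := by
        apply pow_le_one₀ (abs_nonneg _)
        rw [abs_of_nonneg (by linarith)]
        linarith
      rw [e1]
      calc A * B * ((1-x)/2) ^ (s+1) * |(x + 1) / 2| ^ (n - (s+1))
          ≤ A * B * ((1-x)/2) ^ (s+1) * 1 :=
            mul_le_mul_of_nonneg_left e2 (by positivity)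
        _ = A * B * ((1-x)/2) ^ (s+1) := by ring
    calc |A * B * ((x - 1) / 2) ^ (s+1) * ((x + 1) / 2) ^ (n - (s+1))|
        ≤ A * B * ((1-x)/2) ^ (s+1) := habs
      _ ≤ C * (2 * (1/4:ℝ)^(s+1)) := by
          rw [hAdef, hBdef, hCdef]
          exact_mod_cast jacobi_term_bound n (s+1) (Nat.le_add_left 1 s) hs' α β hα hβ hβn
            ((1-x)/2) hδ0 hδ
  have hsum : |∑ s ∈ Finset.range n,
      (Real.Gamma (n + α + 1) / (Real.Gamma ((s+1 : ℕ) + α + 1) * Real.Gamma ((n : ℝ) - (s+1 : ℕ) + 1))) *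
      (Real.Gamma (n + β + 1) / (Real.Gamma ((n : ℝ) - (s+1 : ℕ) + β + 1) * Real.Gamma ((s+1 : ℕ) + 1))) *
      ((x - 1) / 2) ^ (s+1) * ((x + 1) / 2) ^ (n - (s+1))| ≤ C * (2/3) := by
    refine le_trans (Finset.abs_sum_le_sum_abs _ _) ?_
    calc (∑ s ∈ Finset.range n,
        |(Real.Gamma (n + α + 1) / (Real.Gamma ((s+1 : ℕ) + α + 1) * Real.Gamma ((n : ℝ) - (s+1 : ℕ) + 1))) *
        (Real.Gamma (n + β + 1) / (Real.Gamma ((n : ℝ) - (s+1 : ℕ) + β + 1) * Real.Gamma ((s+1 : ℕ) + 1))) *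
        ((x - 1) / 2) ^ (s+1) * ((x + 1) / 2) ^ (n - (s+1))|)
        ≤ ∑ s ∈ Finset.range n, C * (2 * (1/4:ℝ)^(s+1)) := Finset.sum_le_sum htail
      _ = C * 2 * ((1/4:ℝ) * ∑ s ∈ Finset.range n, (1/4:ℝ)^s) := by
          rw [Finset.mul_sum, Finset.mul_sum]
          apply Finset.sum_congr rfl
          intro s _
          rw [pow_succ]
          ring
      _ ≤ C * (2/3) := by
          have hg : ∑ s ∈ Finset.range n, (1/4:ℝ)^s ≤ 4/3 := by
            rw [geom_sum_eq (by norm_num : (1/4:ℝ) ≠ 1)]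
            rw [div_le_iff_of_neg (by norm_num : (1/4:ℝ) - 1 < 0)]
            have := pow_nonneg (by norm_num : (0:ℝ) ≤ 1/4) n
            linarith
          nlinarith
  have hlow := neg_le_of_abs_le hsum
  linarith

theorem lower_bound_jacobi_on_cuspidal
    (p η : ℝ) (hp : 1 ≤ p) (hη0 : 0 < η) (hη1 : η < 1)
    (f : ℝ → ℝ)
    (hf_cont : ContinuousOn f (Set.Icc η 1))
    (hf_nonneg : ∀ x ∈ Set.Icc η 1, 0 ≤ f x)
    (hf_anti : AntitoneOn f (Set.Icc η 1))
    (hf_conv : ConvexOn ℝ (Set.Icc η 1) f)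
    (hfη : f η ≤ 1) (hf1 : f 1 = 0)
    (hf_pos : ∀ x ∈ Set.Ico η 1, 0 < f x)
    (r : ℝ) (hr : 1 ≤ r)
    (hconc : ConcaveOn ℝ (Set.Icc η 1) (fun x => f x ^ (1 / r)))
    (K : Set (ℝ × ℝ)) (hK : IsCompact K)
    (hK1 : {z : ℝ × ℝ | η ≤ z.1 ∧ z.1 ≤ 1 ∧ 0 ≤ z.2 ∧ z.2 ≤ f z.1} ⊆ K)
    (ε x : ℕ → ℝ) (N : ℕ)
    (hεx : ∀ n : ℕ, N ≤ n → 0 < ε n ∧ x n ∈ Set.Ioo η 1 ∧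
      x n = 1 - Real.sqrt (1 / (4 * (n : ℝ) ^ 4) - (ε n) ^ 2 / (n : ℝ) ^ 4) ∧
      f (x n) = ε n / (n : ℝ) ^ 2)
    (hε0 : Filter.Tendsto ε Filter.atTop (nhds 0))
    (α β : ℝ) (hα : 0 ≤ α) (hβ : -1 < β) :
    ∃ (Υ : ℝ) (n₀ : ℕ), 0 < Υ ∧ ∀ n : ℕ, n₀ ≤ n →
      Υ * ε n * (n : ℝ) ^ (α * p - 4) ≤ ∫ z in K, |jacobiP n α β z.1| ^ p := by
  have hr0 : (0:ℝ) < r := by linarith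
  have hp0 : (0:ℝ) < p := by linarith
  have hΓα : 0 < Real.Gamma (α + 1) := Real.Gamma_pos_of_pos (by linarith)
  set c : ℝ := (1/2:ℝ) ^ r with hcdef
  have hc : 0 < c := Real.rpow_pos_of_pos (by norm_num) r
  set M : ℝ := (12 * Real.Gamma (α+1)) ^ p with hMdef
  have hM : 0 < M := Real.rpow_pos_of_pos (by positivity) p
  obtain ⟨n₁, hn₁⟩ := exists_nat_ge β
  obtain ⟨N₂, hN₂⟩ := Metric.tendsto_atTop.mp hε0 (1/4) (by norm_num)
  refine ⟨c / (8 * M), max (max N N₂) (max n₁ 1), by positivity, ?_⟩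
  intro n hn
  have hnN : N ≤ n := le_trans (le_max_left N N₂ |>.trans (le_max_left _ _)) hn
  have hnN₂ : N₂ ≤ n := le_trans (le_max_right N N₂ |>.trans (le_max_left _ _)) hn
  have hnn₁ : n₁ ≤ n := le_trans (le_max_left n₁ 1 |>.trans (le_max_right _ _)) hn
  have hn1 : 1 ≤ n := le_trans (le_max_right n₁ 1 |>.trans (le_max_right _ _)) hn
  obtain ⟨hε_pos, hx_mem, hx_eq, hf_eq⟩ := hεx n hnN
  have hεlt : ε n < 1/4 := by
    have := hN₂ n hnN₂
    rw [Real.dist_eq, sub_zero] at this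
    exact lt_of_abs_lt this
  have hnR : (1:ℝ) ≤ (n:ℝ) := by exact_mod_cast hn1
  have hnpos : (0:ℝ) < (n:ℝ) := by linarith
  have hβn : β ≤ (n:ℝ) := le_trans hn₁ (by exact_mod_cast hnn₁)
  have hΓnα : 0 < Real.Gamma ((n:ℝ) + α + 1) := Real.Gamma_pos_of_pos (by linarith)
  have hΓn : 0 < Real.Gamma ((n:ℝ) + 1) := Real.Gamma_pos_of_pos (by linarith)
  -- square root estimates
  set s : ℝ := Real.sqrt (1 / (4 * (n : ℝ) ^ 4) - (ε n) ^ 2 / (n : ℝ) ^ 4) with hsdef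
  have hn4 : (0:ℝ) < (n:ℝ)^4 := by positivity
  have hs_le : s ≤ 1/(2*(n:ℝ)^2) := by
    have h1 : 1 / (4 * (n : ℝ) ^ 4) - (ε n) ^ 2 / (n : ℝ) ^ 4 ≤ (1/(2*(n:ℝ)^2))^2 := by
      have e : (1/(2*(n:ℝ)^2))^2 = 1/(4*(n:ℝ)^4) := by
        field_simp; ring
      rw [e]
      have : (0:ℝ) ≤ (ε n)^2 / (n:ℝ)^4 := by positivity
      linarith
    calc s ≤ Real.sqrt ((1/(2*(n:ℝ)^2))^2) := Real.sqrt_le_sqrt h1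
      _ = 1/(2*(n:ℝ)^2) := Real.sqrt_sq (by positivity)
  have hs_ge : 1/(4*(n:ℝ)^2) ≤ s := by
    have h1 : (1/(4*(n:ℝ)^2))^2 ≤ 1 / (4 * (n : ℝ) ^ 4) - (ε n) ^ 2 / (n : ℝ) ^ 4 := by
      have h2 : (ε n)^2 ≤ 1/16 := by nlinarith
      have e : (1/(4*(n:ℝ)^2))^2 = 1/(16*(n:ℝ)^4) := by field_simp; ring
      rw [e]
      have key : (1 / (4 * (n : ℝ) ^ 4) - (ε n) ^ 2 / (n : ℝ) ^ 4) - 1/(16*(n:ℝ)^4)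
          = (1/4 - (ε n)^2 - 1/16)/(n:ℝ)^4 := by
        field_simp
      have hnum : (0:ℝ) ≤ (1/4 - (ε n)^2 - 1/16)/(n:ℝ)^4 :=
        div_nonneg (by linarith) hn4.le
      linarith
    calc 1/(4*(n:ℝ)^2) = Real.sqrt ((1/(4*(n:ℝ)^2))^2) := (Real.sqrt_sq (by positivity)).symm
      _ ≤ s := Real.sqrt_le_sqrt h1
  have hxs : 1 - x n = s := by rw [hx_eq]; ring
  have hxn1 : x n < 1 := hx_mem.2
  -- the concavity estimate
  have hxnI : x n ∈ Set.Icc η 1 := ⟨hx_mem.1.le, hx_mem.2.le⟩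
  have h1I : (1:ℝ) ∈ Set.Icc η 1 := ⟨hη1.le, le_refl 1⟩
  have hfxn_nonneg : 0 ≤ f (x n) := hf_nonneg _ hxnI
  have hfu : ∀ u ∈ Set.Icc (x n) ((1 + x n)/2), c * f (x n) ≤ f u := by
    intro u hu
    have hu1 : u ≤ 1 := by
      have := hu.2
      linarith
    have huI : u ∈ Set.Icc η 1 := ⟨le_trans hx_mem.1.le hu.1, hu1⟩
    have hd : 0 < 1 - x n := by linarith
    have ha : 0 ≤ (1 - u)/(1 - x n) := div_nonneg (by linarith) hd.le
    have hb : 0 ≤ (u - x n)/(1 - x n) := div_nonneg (by linarith [hu.1]) hd.le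
    have hab : (1 - u)/(1 - x n) + (u - x n)/(1 - x n) = 1 := by
      field_simp
      ring
    have hkey := hconc.2 hxnI h1I ha hb hab
    simp only [smul_eq_mul, mul_one] at hkey
    have hcomb : (1 - u)/(1 - x n) * x n + (u - x n)/(1 - x n) = u := by
      field_simp
      ring
    rw [hcomb] at hkey
    rw [hf1, Real.zero_rpow (by positivity : (1/r:ℝ) ≠ 0), mul_zero, add_zero] at hkey
    have ha2 : (1/2:ℝ) ≤ (1 - u)/(1 - x n) := by
      rw [le_div_iff₀ hd]
      have h2u := hu.2
      linarith
    have hg0 : 0 ≤ f (x n) ^ (1/r : ℝ) := Real.rpow_nonneg hfxn_nonneg _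
    have hstep : (1/2:ℝ) * f (x n) ^ (1/r:ℝ) ≤ f u ^ (1/r:ℝ) := by
      have := mul_le_mul_of_nonneg_right ha2 hg0
      linarith
    have hmono := Real.rpow_le_rpow (by positivity) hstep (by linarith : (0:ℝ) ≤ r)
    rw [Real.mul_rpow (by norm_num) hg0] at hmono
    have e1 : (f (x n) ^ (1/r:ℝ)) ^ r = f (x n) := by
      rw [← Real.rpow_mul hfxn_nonneg, one_div_mul_cancel hr0.ne', Real.rpow_one]
    have e2 : (f u ^ (1/r:ℝ)) ^ r = f u := by
      rw [← Real.rpow_mul (hf_nonneg _ huI), one_div_mul_cancel hr0.ne', Real.rpow_one]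
    rw [e1, e2] at hmono
    exact hmono
  -- the rectangle
  set R : Set (ℝ × ℝ) := Set.Icc (x n) ((1 + x n)/2) ×ˢ Set.Icc (0:ℝ) (c * (ε n / (n:ℝ)^2))
    with hRdef
  have hRK : R ⊆ K := by
    rintro ⟨u, v⟩ hz
    rw [hRdef, Set.mem_prod] at hz
    obtain ⟨hu, hv⟩ := hz
    apply hK1
    refine ⟨le_trans hx_mem.1.le hu.1, by linarith [hu.2, hxn1], hv.1, ?_⟩
    calc v ≤ c * (ε n/(n:ℝ)^2) := hv.2
      _ = c * f (x n) := by rw [hf_eq]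
      _ ≤ f u := hfu u hu
  -- continuity and integrability
  have hjc : Continuous (jacobiP n α β) := by
    unfold jacobiP
    apply continuous_finset_sum
    intro s _
    fun_prop
  have hg_cont : Continuous (fun z : ℝ × ℝ => |jacobiP n α β z.1| ^ p) := by
    apply continuous_iff_continuousAt.mpr
    intro z
    exact (Real.continuousAt_rpow_const _ _ (Or.inr hp0.le)).comp
      ((hjc.comp continuous_fst).abs.continuousAt)
  have hg_int : IntegrableOn (fun z : ℝ × ℝ => |jacobiP n α β z.1| ^ p) K :=
    hg_cont.continuousOn.integrableOn_compact hK
  have hg_nonneg : ∀ z : ℝ × ℝ, 0 ≤ |jacobiP n α β z.1| ^ p :=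
    fun z => Real.rpow_nonneg (abs_nonneg _) p
  -- measure of R
  have hRmeas : MeasurableSet R := measurableSet_Icc.prod measurableSet_Icc
  have hside1 : (0:ℝ) ≤ (1 + x n)/2 - x n := by linarith
  have hside2 : (0:ℝ) ≤ c * (ε n/(n:ℝ)^2) := by positivity
  have hvol : (volume R).toReal = ((1 + x n)/2 - x n) * (c * (ε n/(n:ℝ)^2)) := by
    rw [hRdef, Measure.volume_eq_prod, Measure.prod_prod, Real.volume_Icc, Real.volume_Icc,
      sub_zero, ← ENNReal.ofReal_mul hside1, ENNReal.toReal_ofReal (by positivity)]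
  have hvol_ne : volume R ≠ ⊤ := by
    rw [hRdef, Measure.volume_eq_prod, Measure.prod_prod, Real.volume_Icc, Real.volume_Icc]
    exact ENNReal.mul_ne_top ENNReal.ofReal_ne_top ENNReal.ofReal_ne_top
  -- pointwise bound
  set m : ℝ := Real.Gamma ((n:ℝ) + α + 1) / (Real.Gamma (α+1) * Real.Gamma ((n:ℝ)+1)) / 12
    with hmdef
  have hm : 0 < m := by positivity
  have hpt : ∀ z ∈ R, m ^ p ≤ |jacobiP n α β z.1| ^ p := by
    rintro ⟨u, v⟩ hz
    rw [hRdef, Set.mem_prod] at hz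
    obtain ⟨hu, _⟩ := hz
    have hu0 : (0:ℝ) ≤ u := le_trans (by linarith [hx_mem.1]) hu.1
    have hu1 : u ≤ 1 := by linarith [hu.2, hxn1]
    have h1u : 1 - u ≤ 1/(2*(n:ℝ)^2) := by
      have : 1 - u ≤ 1 - x n := by linarith [hu.1]
      rw [hxs] at this
      linarith
    have hjl := jacobi_lower n hn1 α β hα hβ hβn u hu0 hu1 h1u
    exact Real.rpow_le_rpow hm.le (le_trans hjl (le_abs_self _)) hp0.le
  -- integral estimates
  have hIR : m ^ p * (volume R).toReal ≤ ∫ z in R, |jacobiP n α β z.1| ^ p :=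
    by
      have h := setIntegral_ge_of_const_le hRmeas hvol_ne hpt (hg_int.mono_set hRK)
      rw [smul_eq_mul, mul_comm] at h
      exact h
  have hKR : (∫ z in R, |jacobiP n α β z.1| ^ p) ≤ ∫ z in K, |jacobiP n α β z.1| ^ p :=
    setIntegral_mono_set hg_int (Filter.Eventually.of_forall fun z => hg_nonneg z)
      (HasSubset.Subset.eventuallyLE hRK)
  -- numeric estimates
  have hm_ge : (n:ℝ)^α / (12 * Real.Gamma (α+1)) ≤ m := by
    rw [hmdef, div_div, div_le_div_iff₀ (by positivity) (by positivity)]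
    have h1 := npow_mul_Gamma_le n hn1 α hα
    nlinarith [mul_le_mul_of_nonneg_right h1
      (by positivity : (0:ℝ) ≤ 12 * Real.Gamma (α+1))]
  have hmp : ((n:ℝ)^α / (12*Real.Gamma (α+1))) ^ p ≤ m ^ p :=
    Real.rpow_le_rpow (by positivity) hm_ge hp0.le
  have hmp_eq : ((n:ℝ)^α / (12*Real.Gamma (α+1))) ^ p = (n:ℝ)^(α*p) / M := by
    rw [Real.div_rpow (Real.rpow_nonneg hnpos.le α) (by positivity),
      ← Real.rpow_mul hnpos.le]
  have hA : (n:ℝ)^(α*p-4) = (n:ℝ)^(α*p) / ((n:ℝ)^2*(n:ℝ)^2) := by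
    rw [Real.rpow_sub hnpos]
    congr 1
    rw [show (4:ℝ) = ((4:ℕ):ℝ) by norm_num, Real.rpow_natCast]
    ring
  have hvol_ge : 1/(8*(n:ℝ)^2) * (c * (ε n/(n:ℝ)^2)) ≤ (volume R).toReal := by
    rw [hvol]
    apply mul_le_mul_of_nonneg_right _ hside2
    have e : (1 + x n)/2 - x n = (1 - x n)/2 := by ring
    rw [e, hxs]
    have e2 : 1/(8*(n:ℝ)^2) = (1/(4*(n:ℝ)^2))/2 := by ring
    linarith
  calc c / (8*M) * ε n * (n:ℝ)^(α*p-4)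
      = ((n:ℝ)^(α*p)/M) * (1/(8*(n:ℝ)^2) * (c * (ε n/(n:ℝ)^2))) := by
        rw [hA]
        field_simp
    _ ≤ m^p * (1/(8*(n:ℝ)^2) * (c * (ε n/(n:ℝ)^2))) := by
        apply mul_le_mul_of_nonneg_right _ (by positivity)
        exact hmp_eq ▸ hmp
    _ ≤ m^p * (volume R).toReal :=
        mul_le_mul_of_nonneg_left hvol_ge (by positivity)
    _ ≤ ∫ z in R, |jacobiP n α β z.1| ^ p := hIR
    _ ≤ ∫ z in K, |jacobiP n α β z.1| ^ p := hKR
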